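/- Let Σ be a finite alphabet and α : ℕ → Σ an infinite string in which every symbol occurs infinitely often. Suppose that: (a) there do not exist two distinct finite strings σ, τ of equal length, with τ a permutation (rearrangement) of σ, such that both σ and τ occur infinitely often as contiguous substrings of α; and (b) at least two distinct symbols occur infinitely often in α. Then there exist symbols b, d, e ∈ Σ with d ≠ b and e ≠ b such that for every n ∈ ℕ there exists m > n for which the finite string d·b^m·e (the symbol d, followed by m copies of b, followed by e) occurs as a contiguous substring of α. -/

import Mathlib

/-- The finite string `σ` occurs in the infinite string `α` at position `i`. -/
def OccursAt {A : Type*} (σ : List A) (α : ℕ → A) (i : ℕ) : Prop :=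
  ∀ j (h : j < σ.length), σ.get ⟨j, h⟩ = α (i + j)

/-- The finite string `σ` occurs infinitely often (as a contiguous substring) in `α`. -/
def OccursInfinitelyOften {A : Type*} (σ : List A) (α : ℕ → A) : Prop :=
  {i : ℕ | OccursAt σ α i}.Infinite

/-- `τ` is a permutation (rearrangement) of `σ`: same length, and there is a bijection
`h` of the index set with `τ(i) = σ(h(i))`. -/
def IsRearrangement {A : Type*} (σ τ : List A) : Prop :=
  ∃ (hlen : σ.length = τ.length) (h : Equiv.Perm (Fin σ.length)),
    ∀ i : Fin σ.length, τ.get (Fin.cast hlen i) = σ.get (h i)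

section AuxPf
variable {A : Type*} {B : Type*}

lemma aux_fiber [Finite B] {S : Set ℕ} (hS : S.Infinite) (f : ℕ → B) :
    ∃ b, {i | i ∈ S ∧ f i = b}.Infinite := by
  by_contra h
  push_neg at h
  exact hS (Set.Finite.subset (Set.finite_iUnion h)
    (fun i hi => Set.mem_iUnion.2 ⟨f i, hi, rfl⟩))

lemma aux_occursAt_ofFn {L : ℕ} (u : Fin L → A) (α : ℕ → A) (i : ℕ) :
    OccursAt (List.ofFn u) α i ↔ ∀ j : Fin L, u j = α (i + j) := by
  constructor
  · intro h j
    have := h j (by simp)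
    simpa [List.get_ofFn] using this
  · intro h j hj
    have hj' : j < L := by simpa using hj
    have := h ⟨j, hj'⟩
    simpa [List.get_ofFn] using this

lemma aux_rearr_ofFn {L : ℕ} (u : Fin L → A) (e : Equiv.Perm (Fin L)) :
    IsRearrangement (List.ofFn u) (List.ofFn (u ∘ e)) := by
  have hL : (List.ofFn u).length = L := List.length_ofFn (f := u)
  refine ⟨by simp, (finCongr hL).trans (e.trans (finCongr hL.symm)), ?_⟩
  intro i
  simp only [List.get_ofFn]
  rfl

lemma aux_run {A : Type*} [Fintype A] [Inhabited A] (α : ℕ → A)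
    (hnoperm : ¬ ∃ σ τ : List A, σ ≠ τ ∧ IsRearrangement σ τ ∧
      OccursInfinitelyOften σ α ∧ OccursInfinitelyOften τ α)
    (k : ℕ) (hk : 0 < k) :
    ∃ b, {i : ℕ | ∀ j < k, α (i + j) = b}.Infinite := by
  classical
  set s := Fintype.card A with hs
  set K := s * k + 1 with hK
  obtain ⟨w, hw⟩ := aux_fiber (Set.infinite_univ (α := ℕ))
    (fun i => (fun j : Fin K => α (i + j)))
  set W : ℕ → A := fun t => if h : t < K then w ⟨t, h⟩ else default with hWdef
  have hIinf : {i : ℕ | ∀ t < K, α (i + t) = W t}.Infinite := by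
    refine hw.mono ?_
    rintro i ⟨-, hi⟩ t ht
    have := congr_fun hi ⟨t, ht⟩
    simp only [hWdef, dif_pos ht]
    exact this
  set I := {i : ℕ | ∀ t < K, α (i + t) = W t} with hIdef
  -- pigeonhole on positions 0, k, 2k, ..., s*k
  obtain ⟨x, y, hxy, hgxy⟩ := Fintype.exists_ne_map_eq_of_card_lt
    (fun a : Fin (s + 1) => W (a * k)) (by simp [hs])
  have hkey : ∃ a c : ℕ, a < c ∧ c ≤ s ∧ W (a * k) = W (c * k) := by
    rcases Nat.lt_or_ge x.1 y.1 with h | h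
    · exact ⟨x.1, y.1, h, by omega, hgxy⟩
    · have : y.1 < x.1 := by
        rcases Nat.lt_or_ge y.1 x.1 with h' | h'
        · exact h'
        · exact absurd (Fin.ext (show x.1 = y.1 by omega)) hxy
      exact ⟨y.1, x.1, this, by omega, hgxy.symm⟩
  obtain ⟨a, c, hac, hcs, hWeq⟩ := hkey
  set p := a * k with hp
  set q := c * k with hq
  have h1 : (a + 1) * k ≤ c * k := Nat.mul_le_mul_right k (by omega)
  have h2 : (a + 1) * k = a * k + k := by ring
  have h3 : c * k ≤ s * k := Nat.mul_le_mul_right k hcs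
  have hpk : p + k ≤ q := by omega
  have hqK : q < K := by omega
  set L' := q - p - 1 with hL'
  have hLeq : p + (L' + 1) = q := by omega
  set u : Fin (L' + 1) → A := fun j => W (p + j) with hu
  set v : Fin (L' + 1) → A := fun j => W (p + 1 + j) with hv
  -- both occur infinitely often
  have hocc_u : OccursInfinitelyOften (List.ofFn u) α := by
    refine Set.Infinite.mono ?_ (hIinf.image (f := fun i => i + p)
      (Set.injOn_of_injective (add_left_injective p)))
    rintro _ ⟨i, hiI, rfl⟩
    rw [Set.mem_setOf_eq, aux_occursAt_ofFn]
    intro j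
    have hjK : p + j.1 < K := by have := j.2; omega
    have h5 := hiI (p + j.1) hjK
    rw [hu]
    simp only
    rw [show i + p + j.1 = i + (p + j.1) from by omega]
    exact h5.symm
  have hocc_v : OccursInfinitelyOften (List.ofFn v) α := by
    refine Set.Infinite.mono ?_ (hIinf.image (f := fun i => i + (p + 1))
      (Set.injOn_of_injective (add_left_injective (p + 1))))
    rintro _ ⟨i, hiI, rfl⟩
    rw [Set.mem_setOf_eq, aux_occursAt_ofFn]
    intro j
    have hjK : p + 1 + j.1 < K := by have := j.2; omega
    have h5 := hiI (p + 1 + j.1) hjK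
    rw [hv]
    simp only
    rw [show i + (p + 1) + j.1 = i + (p + 1 + j.1) from by omega]
    exact h5.symm
  -- v is the rotation of u
  have hveq : v = u ∘ (finRotate (L' + 1)) := by
    funext j
    simp only [Function.comp_apply, finRotate_succ_apply, hu, hv]
    by_cases hlast : j = Fin.last L'
    · have h4 : ((j + 1 : Fin (L' + 1))).1 = 0 := by
        rw [Fin.val_add_one, if_pos hlast]
      rw [h4, hlast]
      simp only [Fin.val_last]
      rw [show p + 1 + L' = q from by omega, add_zero]
      exact hWeq.symm
    · have h4 : ((j + 1 : Fin (L' + 1))).1 = j.1 + 1 := by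
        rw [Fin.val_add_one, if_neg hlast]
      rw [h4, show p + 1 + j.1 = p + (j.1 + 1) from by omega]
  -- apply hnoperm
  have heq : List.ofFn u = List.ofFn v := by
    by_contra hne
    exact hnoperm ⟨List.ofFn u, List.ofFn v, hne,
      by rw [hveq]; exact aux_rearr_ofFn u (finRotate (L' + 1)), hocc_u, hocc_v⟩
  have huv : u = v := List.ofFn_injective heq
  have hstep : ∀ j, j ≤ L' → W (p + 1 + j) = W (p + j) := by
    intro j hj
    exact (congr_fun huv ⟨j, by omega⟩).symm
  have hconst : ∀ j, j ≤ L' + 1 → W (p + j) = W p := by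
    intro j
    induction j with
    | zero => simp
    | succ n ih =>
      intro h
      rw [show p + (n + 1) = p + 1 + n from by omega, hstep n (by omega), ih (by omega)]
  refine ⟨W p, ?_⟩
  refine Set.Infinite.mono ?_ (hIinf.image (f := fun i => i + p)
    (Set.injOn_of_injective (add_left_injective p)))
  rintro _ ⟨i, hiI, rfl⟩
  intro j hj
  have hjL : j < L' + 1 := by omega
  have hjK : p + j < K := by omega
  rw [add_assoc, hiI (p + j) hjK, hconst j (by omega)]

lemma aux_occursAt_dbe {A : Type*} (α : ℕ → A) (d b e : A) (m i0 : ℕ)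
    (h0 : α i0 = d) (hb : ∀ j < m, α (i0 + 1 + j) = b) (he : α (i0 + 1 + m) = e) :
    OccursAt ([d] ++ List.replicate m b ++ [e]) α i0 := by
  intro j hj
  have hj2 : j < m + 2 := by simp at hj; omega
  have hget : ([d] ++ List.replicate m b ++ [e]).get ⟨j, hj⟩ =
      ([d] ++ List.replicate m b ++ [e])[j] := rfl
  rw [hget]
  rcases Nat.eq_zero_or_pos j with rfl | hpos
  · simpa [List.getElem_append] using h0.symm
  · obtain ⟨j', rfl⟩ : ∃ j', j = j' + 1 := ⟨j - 1, by omega⟩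
    rcases Nat.lt_or_ge j' m with h | h
    · have : ([d] ++ List.replicate m b ++ [e])[j' + 1] = b := by
        simp [List.getElem_append, h]
      rw [this, show i0 + (j' + 1) = i0 + 1 + j' from by omega]
      exact (hb j' h).symm
    · have hj1 : j' = m := by omega
      subst hj1
      have h6 : ([d] ++ List.replicate j' b ++ [e])[j' + 1]'(by simp) = e := by
        simp [List.getElem_append]
      rw [h6, show i0 + (j' + 1) = i0 + 1 + j' from by omega]
      exact he.symm

lemma aux_border {A : Type*} (α : ℕ → A) (b c : A) (hcb : c ≠ b)
    (hcinf : {n : ℕ | α n = c}.Infinite)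
    (hrun : ∀ n, ∃ k > n, {i : ℕ | ∀ j < k, α (i + j) = b}.Infinite) (n : ℕ) :
    ∃ de : A × A, ∃ m i0, de.1 ≠ b ∧ de.2 ≠ b ∧ m > n ∧
      OccursAt ([de.1] ++ List.replicate m b ++ [de.2]) α i0 := by
  classical
  obtain ⟨k, hkn, hkinf⟩ := hrun n
  obtain ⟨t0, ht0⟩ := hcinf.nonempty
  obtain ⟨i, hiI, hti⟩ := hkinf.exists_gt t0
  have hexR : ∃ r, k ≤ r ∧ α (i + r) ≠ b := by
    obtain ⟨t1, ht1, ht1'⟩ := hcinf.exists_gt (i + k)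
    refine ⟨t1 - i, by omega, ?_⟩
    rw [show i + (t1 - i) = t1 from by omega, ht1]
    exact hcb
  set F := Nat.find hexR with hFdef
  have hF := Nat.find_spec hexR
  have hFall : ∀ r < F, α (i + r) = b := by
    intro r hr
    rcases Nat.lt_or_ge r k with h | h
    · exact hiI r h
    · have h7 := Nat.find_min hexR hr
      push_neg at h7
      exact h7 h
  have hexL : ∃ dd, dd < i ∧ α (i - dd - 1) ≠ b := by
    refine ⟨i - t0 - 1, by omega, ?_⟩
    rw [show i - (i - t0 - 1) - 1 = t0 from by omega, ht0]
    exact hcb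
  set D := Nat.find hexL with hDdef
  have hD := Nat.find_spec hexL
  have hDall : ∀ d' < D, α (i - d' - 1) = b := by
    intro d' hd'
    have h7 := Nat.find_min hexL hd'
    push_neg at h7
    exact h7 (by have := hD.1; omega)
  have hDi : D < i := hD.1
  have hFk : k ≤ F := hF.1
  refine ⟨(α (i - D - 1), α (i + F)), D + F, i - D - 1, hD.2, hF.2, by omega, ?_⟩
  apply aux_occursAt_dbe
  · rfl
  · intro j hj
    rcases Nat.lt_or_ge j D with h | h
    · have h8 := hDall (D - 1 - j) (by omega)
      rw [show i - D - 1 + 1 + j = i - (D - 1 - j) - 1 from by omega]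
      exact h8
    · have h8 := hFall (j - D) (by omega)
      rw [show i - D - 1 + 1 + j = i + (j - D) from by omega]
      exact h8
  · rw [show i - D - 1 + 1 + (D + F) = i + F from by omega]


end AuxPf

/-- Combinatorial analysis: if every symbol of the finite alphabet occurs infinitely
often in `α`, no two distinct finite strings that are rearrangements of each other both
occur infinitely often in `α`, and at least two distinct symbols occur infinitely often
in `α`, then there are symbols `b, d, e` with `d ≠ b`, `e ≠ b` such that for every `n`
there is `m > n` for which `d·b^m·e` occurs in `α`. -/
theorem combinatorial_analysis {A : Type*} [Fintype A]
    (α : ℕ → A) (hall : ∀ a : A, {n : ℕ | α n = a}.Infinite)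
    (hnoperm : ¬ ∃ σ τ : List A, σ ≠ τ ∧ IsRearrangement σ τ ∧
      OccursInfinitelyOften σ α ∧ OccursInfinitelyOften τ α)
    (htwo : ∃ a b : A, a ≠ b ∧ {n : ℕ | α n = a}.Infinite ∧ {n : ℕ | α n = b}.Infinite) :
    ∃ b d e : A, d ≠ b ∧ e ≠ b ∧
      ∀ n : ℕ, ∃ m > n, ∃ i, OccursAt ([d] ++ List.replicate m b ++ [e]) α i := by
  classical
  obtain ⟨a0, b0, hab, -, -⟩ := htwo
  haveI : Inhabited A := ⟨a0⟩
  have hrun := aux_run α hnoperm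
  set f : ℕ → A := fun n => (hrun (n + 1) (Nat.succ_pos n)).choose with hf
  have hfs : ∀ n, {i : ℕ | ∀ j < n + 1, α (i + j) = f n}.Infinite :=
    fun n => (hrun (n + 1) (Nat.succ_pos n)).choose_spec
  obtain ⟨b, hb⟩ := aux_fiber (Set.infinite_univ (α := ℕ)) f
  have hbrun : ∀ n, ∃ k > n, {i : ℕ | ∀ j < k, α (i + j) = b}.Infinite := by
    intro n
    obtain ⟨n', hmem, hn'⟩ := hb.exists_gt n
    exact ⟨n' + 1, by omega, hmem.2 ▸ hfs n'⟩
  obtain ⟨c, hcb⟩ : ∃ c, c ≠ b := by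
    rcases eq_or_ne a0 b with rfl | h
    · exact ⟨b0, fun hh => hab hh.symm⟩
    · exact ⟨a0, h⟩
  have hmain := fun n => aux_border α b c hcb (hall c) hbrun n
  set g : ℕ → A × A := fun n => (hmain n).choose with hg
  have hgs : ∀ n, ∃ m i0, (g n).1 ≠ b ∧ (g n).2 ≠ b ∧ m > n ∧
      OccursAt ([(g n).1] ++ List.replicate m b ++ [(g n).2]) α i0 :=
    fun n => (hmain n).choose_spec
  obtain ⟨⟨d, e⟩, hde⟩ := aux_fiber (Set.infinite_univ (α := ℕ)) g
  obtain ⟨n0, hn0⟩ := hde.nonempty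
  obtain ⟨m0, i00, hd1, he1, -, -⟩ := hgs n0
  rw [hn0.2] at hd1 he1
  refine ⟨b, d, e, hd1, he1, ?_⟩
  intro n
  obtain ⟨n', hmem, hn'⟩ := hde.exists_gt n
  obtain ⟨m, i0', h1, h2, h3, h4⟩ := hgs n'
  rw [hmem.2] at h4
  exact ⟨m, by omega, i0', h4⟩
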